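/- arXiv:2201.01205 — 3 statements merged into one kernel-verified Lean document; each statement's English description precedes it below -/
import Mathlib

section
/- Assume the strengthened Legendre condition (L'): R(t) is positive definite for every t ∈ [0,T]; set A = −R⁻¹Q, B = R⁻¹, C = P − QᵀR⁻¹Q. Assume condition (SR): there exists a C¹ matrix function W : [0,T] → ℝ^{n×n} with W(t) symmetric for all t, solving the Riccati differential equation Ẇ − C + WA + AᵀW + WBW = 0 on all of [0,T], and such that W(T) − W(0) is positive definite. Then Q(v) > 0 for every nonzero v in the space V of C¹ T-periodic functions with v(0) = v(T). -/
open Matrix Set intervalIntegral MeasureTheory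

lemma aux_dot_swap {n : ℕ} (M : Matrix (Fin n) (Fin n) ℝ) (x y : Fin n → ℝ) :
    x ⬝ᵥ M *ᵥ y = y ⬝ᵥ Mᵀ *ᵥ x := by
  rw [dotProduct_mulVec, mulVec_transpose, dotProduct_comm]

lemma aux_riccati_expand {n : ℕ} (Pm Qm Rm Wm : Matrix (Fin n) (Fin n) ℝ)
    (hRs : Rmᵀ = Rm) :
    Pm - Qmᵀ * Rm⁻¹ * Qm - Wm * (-Rm⁻¹ * Qm) - (-Rm⁻¹ * Qm)ᵀ * Wm - Wm * Rm⁻¹ * Wm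
      = Pm - Qmᵀ * Rm⁻¹ * Qm + Wm * Rm⁻¹ * Qm + Qmᵀ * Rm⁻¹ * Wm - Wm * Rm⁻¹ * Wm := by
  have h : (Rm⁻¹)ᵀ = Rm⁻¹ := by rw [transpose_nonsing_inv, hRs]
  simp only [transpose_neg, transpose_mul, h]
  noncomm_ring

lemma aux_quad_identity {n : ℕ} (Pm Qm Rm Wm : Matrix (Fin n) (Fin n) ℝ)
    (hRs : Rmᵀ = Rm) (hWs : Wmᵀ = Wm) (h1 : Rm * Rm⁻¹ = 1)
    (a b : Fin n → ℝ) :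
    b ⬝ᵥ Pm *ᵥ b + 2 * (a ⬝ᵥ Qm *ᵥ b) + a ⬝ᵥ Rm *ᵥ a
      = (a + (Rm⁻¹ * (Qm - Wm)) *ᵥ b) ⬝ᵥ Rm *ᵥ (a + (Rm⁻¹ * (Qm - Wm)) *ᵥ b)
        + (a ⬝ᵥ Wm *ᵥ b
           + b ⬝ᵥ (Pm - Qmᵀ * Rm⁻¹ * Qm + Wm * Rm⁻¹ * Qm + Qmᵀ * Rm⁻¹ * Wm
              - Wm * Rm⁻¹ * Wm) *ᵥ b
           + b ⬝ᵥ Wm *ᵥ a) := by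
  have hRi : (Rm⁻¹)ᵀ = Rm⁻¹ := by rw [transpose_nonsing_inv, hRs]
  set S : Matrix (Fin n) (Fin n) ℝ := Qm - Wm with hS
  have hRM : Rm * (Rm⁻¹ * S) = S := by rw [← mul_assoc, h1, one_mul]
  have e1 : (a + (Rm⁻¹ * S) *ᵥ b) ⬝ᵥ Rm *ᵥ (a + (Rm⁻¹ * S) *ᵥ b)
      = a ⬝ᵥ Rm *ᵥ a + 2 * (a ⬝ᵥ S *ᵥ b) + b ⬝ᵥ (Sᵀ * (Rm⁻¹ * S)) *ᵥ b := by
    have swap1 : ((Rm⁻¹ * S) *ᵥ b) ⬝ᵥ Rm *ᵥ a = a ⬝ᵥ S *ᵥ b := by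
      rw [aux_dot_swap, hRs, mulVec_mulVec, hRM]
    have swap2 : a ⬝ᵥ Rm *ᵥ ((Rm⁻¹ * S) *ᵥ b) = a ⬝ᵥ S *ᵥ b := by
      rw [mulVec_mulVec, hRM]
    have swap3 : ((Rm⁻¹ * S) *ᵥ b) ⬝ᵥ Rm *ᵥ ((Rm⁻¹ * S) *ᵥ b)
        = b ⬝ᵥ (Sᵀ * (Rm⁻¹ * S)) *ᵥ b := by
      rw [mulVec_mulVec, hRM, aux_dot_swap, mulVec_mulVec]
    rw [mulVec_add, dotProduct_add, add_dotProduct, add_dotProduct,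
      swap1, swap2, swap3]
    ring
  have e2 : b ⬝ᵥ Wm *ᵥ a = a ⬝ᵥ Wm *ᵥ b := by
    rw [aux_dot_swap Wm b a, hWs]
  have hM : Sᵀ * (Rm⁻¹ * S)
      + (Pm - Qmᵀ * Rm⁻¹ * Qm + Wm * Rm⁻¹ * Qm + Qmᵀ * Rm⁻¹ * Wm - Wm * Rm⁻¹ * Wm)
      = Pm := by
    rw [hS, transpose_sub, hWs]; noncomm_ring
  have hSdot : a ⬝ᵥ S *ᵥ b = a ⬝ᵥ Qm *ᵥ b - a ⬝ᵥ Wm *ᵥ b := by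
    rw [hS, sub_mulVec, dotProduct_sub]
  have hPb : b ⬝ᵥ (Sᵀ * (Rm⁻¹ * S)) *ᵥ b
      + b ⬝ᵥ (Pm - Qmᵀ * Rm⁻¹ * Qm + Wm * Rm⁻¹ * Qm + Qmᵀ * Rm⁻¹ * Wm
          - Wm * Rm⁻¹ * Wm) *ᵥ b = b ⬝ᵥ Pm *ᵥ b := by
    rw [← dotProduct_add, ← add_mulVec, hM]
  rw [e1, e2]
  linarith [hSdot, hPb]
open Matrix Set intervalIntegral

lemma aux_contOn_matrix {n : ℕ} {s : Set ℝ} (f : ℝ → Matrix (Fin n) (Fin n) ℝ)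
    (h : ∀ i j, ContinuousOn (fun x => f x i j) s) : ContinuousOn f s :=
  continuousOn_pi.2 fun i => continuousOn_pi.2 fun j => h i j

lemma aux_contOn_inv {n : ℕ} {s : Set ℝ} (R : ℝ → Matrix (Fin n) (Fin n) ℝ)
    (hc : ContinuousOn R s) (hdet : ∀ t ∈ s, (R t).det ≠ 0) :
    ContinuousOn (fun t => (R t)⁻¹) s := by
  have : ∀ t, (R t)⁻¹ = ((R t).det)⁻¹ • (R t).adjugate := by
    intro t; rw [Matrix.inv_def, Ring.inverse_eq_inv']
  simp only [this]
  exact (((continuous_id.matrix_det).comp_continuousOn hc).inv₀ hdet).smul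
    ((continuous_id.matrix_adjugate).comp_continuousOn hc)

lemma aux_mulVec_norm {n : ℕ} (M : Matrix (Fin n) (Fin n) ℝ) (c : ℝ) (hc : 0 ≤ c)
    (hM : ∀ i j, |M i j| ≤ c) (x : Fin n → ℝ) : ‖M *ᵥ x‖ ≤ (n * c) * ‖x‖ := by
  have hnn : (0:ℝ) ≤ (n * c) * ‖x‖ := by positivity
  rw [pi_norm_le_iff_of_nonneg hnn]
  intro i
  calc ‖(M *ᵥ x) i‖ = |∑ j, M i j * x j| := rfl
    _ ≤ ∑ j, |M i j * x j| := Finset.abs_sum_le_sum_abs _ _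
    _ ≤ ∑ _j : Fin n, c * ‖x‖ := by
        refine Finset.sum_le_sum fun j _ => ?_
        rw [abs_mul]
        exact mul_le_mul (hM i j) (norm_le_pi_norm x j) (abs_nonneg _) hc
    _ = (n * c) * ‖x‖ := by simp [mul_assoc]

lemma aux_contOn_mulVec {n : ℕ} {s : Set ℝ} (N : ℝ → Matrix (Fin n) (Fin n) ℝ)
    (x : ℝ → Fin n → ℝ) (hN : ContinuousOn N s) (hx : ContinuousOn x s) :
    ContinuousOn (fun t => N t *ᵥ x t) s := by
  refine continuousOn_pi.2 fun i => ?_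
  simp only [mulVec, dotProduct]
  refine continuousOn_finset_sum _ fun j _ => ContinuousOn.mul ?_ ?_
  · exact ((continuous_apply j).comp (continuous_apply i)).comp_continuousOn hN
  · exact (continuous_apply j).comp_continuousOn hx

lemma aux_contOn_dot {n : ℕ} {s : Set ℝ} (x y : ℝ → Fin n → ℝ)
    (N : ℝ → Matrix (Fin n) (Fin n) ℝ)
    (hx : ContinuousOn x s) (hN : ContinuousOn N s) (hy : ContinuousOn y s) :
    ContinuousOn (fun t => x t ⬝ᵥ N t *ᵥ y t) s := by
  simp only [dotProduct]
  refine continuousOn_finset_sum _ fun i _ => ContinuousOn.mul ?_ ?_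
  · exact (continuous_apply i).comp_continuousOn hx
  · exact (continuous_apply i).comp_continuousOn (aux_contOn_mulVec N y hN hy)

/-- Under the strengthened Legendre condition (L') (`R(t) > 0` on `[0,T]`),
with `A = −R⁻¹Q`, `B = R⁻¹`, `C = P − QᵀR⁻¹Q`, if condition (SR) holds — there is a `C¹`
symmetric solution `W` of the Riccati equation `Ẇ − C + WA + AᵀW + WBW = 0` on all of
`[0,T]` with `W(T) − W(0)` positive definite — then `Q(v) > 0` for every nonzero `C¹`
`T`-periodic `v`. -/
theorem stmt_5 (n : ℕ) (hn : 0 < n) (T : ℝ) (hT : 0 < T)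
    (P Q R : ℝ → Matrix (Fin n) (Fin n) ℝ)
    (hPc : ∀ i j, ContDiffOn ℝ 1 (fun t => P t i j) (Icc 0 T))
    (hQc : ∀ i j, ContDiffOn ℝ 1 (fun t => Q t i j) (Icc 0 T))
    (hRc : ∀ i j, ContDiffOn ℝ 1 (fun t => R t i j) (Icc 0 T))
    (hPs : ∀ t ∈ Icc (0:ℝ) T, (P t).IsSymm)
    (hRs : ∀ t ∈ Icc (0:ℝ) T, (R t).IsSymm)
    (hL' : ∀ t ∈ Icc (0:ℝ) T, (R t).PosDef)
    (A B C : ℝ → Matrix (Fin n) (Fin n) ℝ)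
    (hA : ∀ t, A t = -(R t)⁻¹ * Q t)
    (hB : ∀ t, B t = (R t)⁻¹)
    (hC : ∀ t, C t = P t - (Q t)ᵀ * (R t)⁻¹ * Q t)
    (W : ℝ → Matrix (Fin n) (Fin n) ℝ)
    (hWc : ∀ i j, ContDiffOn ℝ 1 (fun t => W t i j) (Icc 0 T))
    (hWs : ∀ t ∈ Icc (0:ℝ) T, (W t).IsSymm)
    (hW : ∀ t ∈ Icc (0:ℝ) T, ∀ i j,
      HasDerivAt (fun s => W s i j)
        ((C t - W t * A t - (A t)ᵀ * W t - W t * B t * W t) i j) t)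
    (hWbc : (W T - W 0).PosDef) :
    ∀ v : ℝ → Fin n → ℝ, ContDiff ℝ 1 v → v 0 = v T →
      (∃ t ∈ Icc (0:ℝ) T, v t ≠ 0) →
      0 < ∫ t in (0:ℝ)..T,
        (v t ⬝ᵥ (P t).mulVec (v t) + 2 * (deriv v t ⬝ᵥ (Q t).mulVec (v t))
          + deriv v t ⬝ᵥ (R t).mulVec (deriv v t)) := by
  intro v hv1 hper hvne
  have hd : ∀ t, HasDerivAt v (deriv v t) t :=
    fun t => (hv1.differentiable one_ne_zero t).hasDerivAt
  have hvcont : Continuous v := hv1.continuous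
  have hv'cont : Continuous (deriv v) := hv1.continuous_deriv le_rfl
  -- continuity of the matrix coefficient functions
  have cP : ContinuousOn P (Icc 0 T) := aux_contOn_matrix _ fun i j => (hPc i j).continuousOn
  have cQ : ContinuousOn Q (Icc 0 T) := aux_contOn_matrix _ fun i j => (hQc i j).continuousOn
  have cR : ContinuousOn R (Icc 0 T) := aux_contOn_matrix _ fun i j => (hRc i j).continuousOn
  have cW : ContinuousOn W (Icc 0 T) := aux_contOn_matrix _ fun i j => (hWc i j).continuousOn
  have cRi : ContinuousOn (fun t => (R t)⁻¹) (Icc 0 T) :=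
    aux_contOn_inv _ cR fun t ht => (hL' t ht).det_pos.ne'
  -- abbreviations
  set Wd : ℝ → Matrix (Fin n) (Fin n) ℝ :=
    fun t => C t - W t * A t - (A t)ᵀ * W t - W t * B t * W t with hWd
  set Mf : ℝ → Matrix (Fin n) (Fin n) ℝ := fun t => (R t)⁻¹ * (Q t - W t) with hMf
  set wf : ℝ → Fin n → ℝ := fun t => deriv v t + Mf t *ᵥ v t with hwf
  set Gf : ℝ → ℝ := fun t =>
    deriv v t ⬝ᵥ W t *ᵥ v t + v t ⬝ᵥ Wd t *ᵥ v t + v t ⬝ᵥ W t *ᵥ deriv v t with hGf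
  set hf : ℝ → ℝ := fun t => wf t ⬝ᵥ R t *ᵥ wf t with hhf
  -- continuity of everything in sight
  have cA : ContinuousOn A (Icc 0 T) := by
    have : A = fun t => -(R t)⁻¹ * Q t := funext hA
    rw [this]; exact cRi.neg.mul cQ
  have cB : ContinuousOn B (Icc 0 T) := by
    have : B = fun t => (R t)⁻¹ := funext hB
    rw [this]; exact cRi
  have cC : ContinuousOn C (Icc 0 T) := by
    have : C = fun t => P t - (Q t)ᵀ * (R t)⁻¹ * Q t := funext hC
    rw [this]
    exact cP.sub (((continuous_id.matrix_transpose.comp_continuousOn cQ).mul cRi).mul cQ)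
  have cAT : ContinuousOn (fun t => (A t)ᵀ) (Icc 0 T) :=
    continuous_id.matrix_transpose.comp_continuousOn cA
  have cWd : ContinuousOn Wd (Icc 0 T) :=
    ((cC.sub (cW.mul cA)).sub (cAT.mul cW)).sub ((cW.mul cB).mul cW)
  have cM : ContinuousOn Mf (Icc 0 T) := cRi.mul (cQ.sub cW)
  have cwf : ContinuousOn wf (Icc 0 T) :=
    (hv'cont.continuousOn).add (aux_contOn_mulVec _ _ cM hvcont.continuousOn)
  have cGf : ContinuousOn Gf (Icc 0 T) :=
    ((aux_contOn_dot _ _ _ hv'cont.continuousOn cW hvcont.continuousOn).add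
      (aux_contOn_dot _ _ _ hvcont.continuousOn cWd hvcont.continuousOn)).add
      (aux_contOn_dot _ _ _ hvcont.continuousOn cW hv'cont.continuousOn)
  have chf : ContinuousOn hf (Icc 0 T) := aux_contOn_dot _ _ _ cwf cR cwf
  -- derivative of t ↦ v t ⬝ᵥ W t *ᵥ v t
  have hFd : ∀ t ∈ Icc (0:ℝ) T, HasDerivAt (fun s => v s ⬝ᵥ W s *ᵥ v s) (Gf t) t := by
    intro t ht
    have hvi : ∀ i, HasDerivAt (fun s => v s i) (deriv v t i) t :=
      fun i => hasDerivAt_pi.1 (hd t) i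
    have hWdd := hW t ht
    have key : HasDerivAt (fun s => ∑ i, ∑ j, v s i * (W s i j * v s j))
        (∑ i, ∑ j, (deriv v t i * (W t i j * v t j)
          + v t i * (Wd t i j * v t j + W t i j * deriv v t j))) t := by
      refine HasDerivAt.fun_sum fun i _ => HasDerivAt.fun_sum fun j _ => ?_
      exact (hvi i).mul ((hWdd i j).mul (hvi j))
    have efun : (fun s => v s ⬝ᵥ W s *ᵥ v s)
        = fun s => ∑ i, ∑ j, v s i * (W s i j * v s j) := by
      funext s
      simp [dotProduct, mulVec, Finset.mul_sum]
    rw [efun]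
    convert key using 1
    simp only [hGf, dotProduct, mulVec, Finset.mul_sum, ← Finset.sum_add_distrib]
    refine Finset.sum_congr rfl fun i _ => ?_
    refine Finset.sum_congr rfl fun j _ => by ring
  -- FTC
  have hGint : IntervalIntegrable Gf volume 0 T :=
    (by rwa [uIcc_of_le hT.le] : ContinuousOn Gf (uIcc 0 T)).intervalIntegrable
  have hhint : IntervalIntegrable hf volume 0 T :=
    (by rwa [uIcc_of_le hT.le] : ContinuousOn hf (uIcc 0 T)).intervalIntegrable
  have hFTC : ∫ t in (0:ℝ)..T, Gf t
      = v T ⬝ᵥ W T *ᵥ v T - v 0 ⬝ᵥ W 0 *ᵥ v 0 :=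
    integral_eq_sub_of_hasDerivAt
      (fun t ht => hFd t (by rwa [uIcc_of_le hT.le] at ht)) hGint
  -- pointwise identity
  have hW'eq : ∀ t ∈ Icc (0:ℝ) T, Wd t
      = P t - (Q t)ᵀ * (R t)⁻¹ * Q t + W t * (R t)⁻¹ * Q t
        + (Q t)ᵀ * (R t)⁻¹ * W t - W t * (R t)⁻¹ * W t := by
    intro t ht
    simp only [hWd, hA, hB, hC]
    exact aux_riccati_expand _ _ _ _ (hRs t ht).eq
  have hpt : ∀ t ∈ Icc (0:ℝ) T,
      v t ⬝ᵥ (P t).mulVec (v t) + 2 * (deriv v t ⬝ᵥ (Q t).mulVec (v t))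
        + deriv v t ⬝ᵥ (R t).mulVec (deriv v t) = hf t + Gf t := by
    intro t ht
    have hid := aux_quad_identity (P t) (Q t) (R t) (W t) (hRs t ht).eq
      (hWs t ht).eq (mul_nonsing_inv _ (hL' t ht).det_pos.ne'.isUnit)
      (deriv v t) (v t)
    simp only [hhf, hGf, hwf, hMf, hW'eq t ht]
    linarith [hid]
  -- split the integral
  have split : (∫ t in (0:ℝ)..T,
      (v t ⬝ᵥ (P t).mulVec (v t) + 2 * (deriv v t ⬝ᵥ (Q t).mulVec (v t))
        + deriv v t ⬝ᵥ (R t).mulVec (deriv v t)))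
      = (∫ t in (0:ℝ)..T, hf t) + ∫ t in (0:ℝ)..T, Gf t := by
    rw [← integral_add hhint hGint]
    apply integral_congr
    intro t ht
    rw [uIcc_of_le hT.le] at ht
    exact hpt t ht
  have hbdry : (∫ t in (0:ℝ)..T, Gf t) = v T ⬝ᵥ (W T - W 0) *ᵥ v T := by
    rw [hFTC, hper, sub_mulVec, dotProduct_sub]
  have hfnn : ∀ t ∈ Icc (0:ℝ) T, 0 ≤ hf t := by
    intro t ht
    simpa using (hL' t ht).posSemidef.dotProduct_mulVec_nonneg (wf t)
  rw [split, hbdry]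
  by_cases hvT : v T = 0
  · -- boundary term vanishes; the integral must be strictly positive
    have hbz : v T ⬝ᵥ (W T - W 0) *ᵥ v T = 0 := by simp [hvT]
    rw [hbz, add_zero]
    -- find a point where wf is nonzero
    have hex : ∃ t₁ ∈ Icc (0:ℝ) T, wf t₁ ≠ 0 := by
      by_contra hcon
      push_neg at hcon
      have cMe : ∀ i j, ContinuousOn (fun t => Mf t i j) (Icc (0:ℝ) T) := by
        intro i j
        have := ((continuous_apply j).comp (continuous_apply (A := fun _ : Fin n => Fin n → ℝ) i)).comp_continuousOn cM
        exact this
      obtain ⟨C₀, hC₀⟩ := (isCompact_Icc (a := (0:ℝ)) (b := T)).exists_bound_of_continuousOn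
        (f := fun t => ∑ i, ∑ j, |Mf t i j|)
        (continuousOn_finset_sum _ fun i _ => continuousOn_finset_sum _ fun j _ => (cMe i j).abs)
      have hC₀nn : 0 ≤ C₀ := le_trans (norm_nonneg _) (hC₀ 0 ⟨le_refl 0, hT.le⟩)
      have hentry : ∀ t ∈ Icc (0:ℝ) T, ∀ i j, |Mf t i j| ≤ C₀ := by
        intro t ht i j
        have h1 : |Mf t i j| ≤ ∑ i', ∑ j', |Mf t i' j'| := by
          calc |Mf t i j| ≤ ∑ j', |Mf t i j'| :=
                Finset.single_le_sum (fun k _ => abs_nonneg (Mf t i k)) (Finset.mem_univ j)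
            _ ≤ ∑ i', ∑ j', |Mf t i' j'| :=
                Finset.single_le_sum
                  (fun k _ => Finset.sum_nonneg fun l _ => abs_nonneg (Mf t k l))
                  (Finset.mem_univ i)
        exact h1.trans (le_trans (le_abs_self _) (hC₀ t ht))
      have hgron := norm_le_gronwallBound_of_norm_deriv_right_le
        (f := fun s => v (T - s)) (f' := fun s => Mf (T - s) *ᵥ v (T - s))
        (δ := 0) (K := (n : ℝ) * C₀) (ε := 0) (a := 0) (b := T)
        ((hvcont.comp (continuous_const.sub continuous_id)).continuousOn)
        ?_ (by simp [hvT]) ?_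
      · obtain ⟨t₀, ht₀, hvt₀⟩ := hvne
        have ht₀' : T - t₀ ∈ Icc (0:ℝ) T := ⟨by linarith [ht₀.2], by linarith [ht₀.1]⟩
        have := hgron (T - t₀) ht₀'
        rw [sub_zero, gronwallBound_ε0_δ0] at this
        have : v (T - (T - t₀)) = 0 := norm_le_zero_iff.1 this
        rw [show T - (T - t₀) = t₀ by ring] at this
        exact hvt₀ this
      · intro s hs
        have hts : T - s ∈ Icc (0:ℝ) T := ⟨by linarith [hs.2], by linarith [hs.1]⟩
        have h1 : HasDerivAt (fun s => v (T - s)) (-(deriv v (T - s))) s :=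
          HasDerivAt.comp_const_sub T s (hd (T - s))
        have h2 : deriv v (T - s) = -(Mf (T - s) *ᵥ v (T - s)) := by
          have := hcon (T - s) hts
          rw [hwf] at this
          exact eq_neg_of_add_eq_zero_left this
        rw [h2, neg_neg] at h1
        exact h1.hasDerivWithinAt
      · intro s hs
        have hts : T - s ∈ Icc (0:ℝ) T := ⟨by linarith [hs.2], by linarith [hs.1]⟩
        rw [add_zero]
        exact aux_mulVec_norm _ C₀ hC₀nn (fun i j => hentry _ hts i j) _
    obtain ⟨t₁, ht₁, ht₁ne⟩ := hex
    refine intervalIntegral.integral_pos hT ?_ (fun x hx => hfnn x ⟨hx.1.le, hx.2⟩) ?_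
    · exact chf
    · refine ⟨t₁, ht₁, ?_⟩
      simpa using (hL' t₁ ht₁).dotProduct_mulVec_pos ht₁ne
  · have h1 : 0 < v T ⬝ᵥ (W T - W 0) *ᵥ v T := by
      simpa using hWbc.dotProduct_mulVec_pos hvT
    have h2 : 0 ≤ ∫ t in (0:ℝ)..T, hf t :=
      intervalIntegral.integral_nonneg hT.le fun u hu => hfnn u hu
    linarith
end

section
/- Assume R(t) is invertible for every t ∈ [0,T], set A = −R⁻¹Q, B = R⁻¹, C = P − QᵀR⁻¹Q, and let W : [0,T] → ℝ^{n×n} be a C¹ symmetric solution of the Riccati differential equation Ẇ − C + WA + AᵀW + WBW = 0 on [0,T]. Then for every v in the space V of C¹ T-periodic functions with v(0) = v(T), the quadratic functional satisfies the identity Q(v) = v(0)·(W(T) − W(0))v(0) + ∫₀ᵀ ( R(t)v̇(t) + Q(t)v(t) − W(t)v(t) ) · R(t)⁻¹ ( R(t)v̇(t) + Q(t)v(t) − W(t)v(t) ) dt. -/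
open Matrix Set intervalIntegral

open Matrix in
lemma dp_mv {n : ℕ} (M N : Matrix (Fin n) (Fin n) ℝ) (a b : Fin n → ℝ) :
    (M *ᵥ a) ⬝ᵥ (N *ᵥ b) = a ⬝ᵥ ((Mᵀ * N) *ᵥ b) := by
  rw [← mulVec_mulVec, ← vecMul_transpose, ← dotProduct_mulVec]

lemma key_identity {n : ℕ} (p q r w : Matrix (Fin n) (Fin n) ℝ) (hr : IsUnit r.det)
    (hrs : rᵀ = r) (hws : wᵀ = w) (x y : Fin n → ℝ) :
    x ⬝ᵥ p *ᵥ x + 2 * (y ⬝ᵥ q *ᵥ x) + y ⬝ᵥ r *ᵥ y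
      = (y ⬝ᵥ w *ᵥ x
          + x ⬝ᵥ ((p - qᵀ * r⁻¹ * q) - w * (-r⁻¹ * q) - (-r⁻¹ * q)ᵀ * w - w * r⁻¹ * w) *ᵥ x
          + x ⬝ᵥ w *ᵥ y)
        + (r *ᵥ y + q *ᵥ x - w *ᵥ x) ⬝ᵥ r⁻¹ *ᵥ (r *ᵥ y + q *ᵥ x - w *ᵥ x) := by
  have hri : r⁻¹ᵀ = r⁻¹ := by rw [transpose_nonsing_inv, hrs]
  have hrr : r * r⁻¹ = 1 := mul_nonsing_inv r hr
  have hir : r⁻¹ * r = 1 := nonsing_inv_mul r hr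
  have expand : (r *ᵥ y + q *ᵥ x - w *ᵥ x) ⬝ᵥ r⁻¹ *ᵥ (r *ᵥ y + q *ᵥ x - w *ᵥ x)
      = y ⬝ᵥ r *ᵥ y + 2 * (y ⬝ᵥ q *ᵥ x) + x ⬝ᵥ (qᵀ * r⁻¹ * q) *ᵥ x
        - y ⬝ᵥ w *ᵥ x - x ⬝ᵥ w *ᵥ y - x ⬝ᵥ (qᵀ * r⁻¹ * w) *ᵥ x - x ⬝ᵥ (w * r⁻¹ * q) *ᵥ x
        + x ⬝ᵥ (w * r⁻¹ * w) *ᵥ x := by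
    simp only [mulVec_add, mulVec_sub, dotProduct_add, dotProduct_sub, add_dotProduct,
      sub_dotProduct, dp_mv]
    have h1 : rᵀ * r⁻¹ = 1 := by rw [hrs, hrr]
    have h2 : (rᵀ * r⁻¹) * q = q := by rw [h1, one_mul]
    have h3 : (rᵀ * r⁻¹) * w = w := by rw [h1, one_mul]
    have h4 : qᵀ * r⁻¹ * r = qᵀ := by rw [mul_assoc, hir, mul_one]
    have h5 : wᵀ * r⁻¹ * r = w := by rw [mul_assoc, hir, mul_one, hws]
    have h6 : wᵀ * r⁻¹ * q = w * r⁻¹ * q := by rw [hws]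
    have h7 : wᵀ * r⁻¹ * w = w * r⁻¹ * w := by rw [hws]
    simp only [mulVec_mulVec] at *
    rw [h2, h3, h6, h7, h4, h5]
    have hxy : x ⬝ᵥ qᵀ *ᵥ y = y ⬝ᵥ q *ᵥ x := by
      rw [dotProduct_mulVec, vecMul_transpose, dotProduct_comm]
    have hwy : x ⬝ᵥ wᵀ *ᵥ y = x ⬝ᵥ w *ᵥ y := by rw [hws]
    rw [hxy, show rᵀ * r⁻¹ * r = r by rw [h1, one_mul]]
    ring
  rw [expand]
  have hsplit : x ⬝ᵥ ((p - qᵀ * r⁻¹ * q) - w * (-r⁻¹ * q) - (-r⁻¹ * q)ᵀ * w - w * r⁻¹ * w) *ᵥ x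
      = x ⬝ᵥ p *ᵥ x - x ⬝ᵥ (qᵀ * r⁻¹ * q) *ᵥ x + x ⬝ᵥ (w * r⁻¹ * q) *ᵥ x
        + x ⬝ᵥ (qᵀ * r⁻¹ * w) *ᵥ x - x ⬝ᵥ (w * r⁻¹ * w) *ᵥ x := by
    have : (-r⁻¹ * q)ᵀ * w = -(qᵀ * r⁻¹ * w) := by
      rw [transpose_mul, transpose_neg, hri]; noncomm_ring
    rw [this]
    have : w * (-r⁻¹ * q) = -(w * r⁻¹ * q) := by noncomm_ring
    rw [this]
    simp only [sub_neg_eq_add, sub_mulVec, add_mulVec, neg_mulVec, dotProduct_sub,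
      dotProduct_add, dotProduct_neg]
  rw [hsplit]
  ring
open Matrix Set

lemma quad_deriv {n : ℕ} (v : ℝ → Fin n → ℝ) (W : ℝ → Matrix (Fin n) (Fin n) ℝ)
    (W' : Matrix (Fin n) (Fin n) ℝ) (y : Fin n → ℝ) (t : ℝ)
    (hv : HasDerivAt v y t)
    (hW : ∀ i j, HasDerivAt (fun s => W s i j) (W' i j) t) :
    HasDerivAt (fun s => v s ⬝ᵥ W s *ᵥ v s)
      (y ⬝ᵥ W t *ᵥ v t + v t ⬝ᵥ W' *ᵥ v t + v t ⬝ᵥ W t *ᵥ y) t := by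
  have hvi : ∀ i, HasDerivAt (fun s => v s i) (y i) t := fun i => hasDerivAt_pi.mp hv i
  have hsum : HasDerivAt (fun s => ∑ i, ∑ j, v s i * (W s i j * v s j))
      (∑ i, ∑ j, (y i * (W t i j * v t j)
        + v t i * (W' i j * v t j + W t i j * y j))) t :=
    HasDerivAt.fun_sum fun i _ => HasDerivAt.fun_sum fun j _ => (hvi i).fun_mul ((hW i j).fun_mul (hvi j))
  have hfun : (fun s => v s ⬝ᵥ W s *ᵥ v s)
      = fun s => ∑ i, ∑ j, v s i * (W s i j * v s j) := by
    funext s; simp [dotProduct, mulVec, Finset.mul_sum]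
  have hval : y ⬝ᵥ W t *ᵥ v t + v t ⬝ᵥ W' *ᵥ v t + v t ⬝ᵥ W t *ᵥ y
      = ∑ i, ∑ j, (y i * (W t i j * v t j)
        + v t i * (W' i j * v t j + W t i j * y j)) := by
    simp only [dotProduct, mulVec, Finset.mul_sum, mul_add, Finset.sum_add_distrib]
    ring
  rw [hfun, hval] at *
  exact hsum

lemma contOn_dp {n : ℕ} {f g : ℝ → Fin n → ℝ} {M : ℝ → Matrix (Fin n) (Fin n) ℝ} {s : Set ℝ}
    (hf : ContinuousOn f s) (hM : ContinuousOn M s) (hg : ContinuousOn g s) :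
    ContinuousOn (fun t => f t ⬝ᵥ M t *ᵥ g t) s := by
  simp only [dotProduct, mulVec]
  apply continuousOn_finset_sum
  intro i _
  apply ContinuousOn.mul ((continuous_apply i).comp_continuousOn hf)
  apply continuousOn_finset_sum
  intro j _
  exact ((continuous_apply j).comp_continuousOn
    ((continuous_apply i).comp_continuousOn hM)).mul
    ((continuous_apply j).comp_continuousOn hg)

lemma contOn_mv {n : ℕ} {g : ℝ → Fin n → ℝ} {M : ℝ → Matrix (Fin n) (Fin n) ℝ} {s : Set ℝ}
    (hM : ContinuousOn M s) (hg : ContinuousOn g s) :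
    ContinuousOn (fun t => M t *ᵥ g t) s := by
  apply continuousOn_pi.2
  intro i
  simp only [mulVec, dotProduct]
  apply continuousOn_finset_sum
  intro j _
  exact ((continuous_apply j).comp_continuousOn
    ((continuous_apply i).comp_continuousOn hM)).mul
    ((continuous_apply j).comp_continuousOn hg)

lemma contOn_inv {n : ℕ} {R : ℝ → Matrix (Fin n) (Fin n) ℝ} {s : Set ℝ}
    (hR : ContinuousOn R s) (hdet : ∀ t ∈ s, IsUnit (R t).det) :
    ContinuousOn (fun t => (R t)⁻¹) s := by
  have h1 : ContinuousOn (fun t => ((R t).det)⁻¹ • (R t).adjugate) s :=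
    ContinuousOn.smul ((continuous_id.matrix_det.comp_continuousOn hR).inv₀
      fun t ht => (isUnit_iff_ne_zero.mp (hdet t ht)))
      (continuous_id.matrix_adjugate.comp_continuousOn hR)
  refine h1.congr fun t ht => ?_
  rw [Matrix.inv_def, Ring.inverse_eq_inv']

/-- Assume `R(t)` is invertible on `[0,T]`, set `A = −R⁻¹Q`, `B = R⁻¹`,
`C = P − QᵀR⁻¹Q`, and let `W` be a `C¹` symmetric solution of the Riccati equation
`Ẇ − C + WA + AᵀW + WBW = 0` on `[0,T]`. Then for every `C¹` `T`-periodic `v`,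
`Q(v) = v(0)·(W(T) − W(0))v(0) + ∫₀ᵀ (Rv̇ + Qv − Wv)·R⁻¹(Rv̇ + Qv − Wv) dt`. -/
theorem stmt_6 (n : ℕ) (hn : 0 < n) (T : ℝ) (hT : 0 < T)
    (P Q R : ℝ → Matrix (Fin n) (Fin n) ℝ)
    (hPc : ∀ i j, ContDiffOn ℝ 1 (fun t => P t i j) (Icc 0 T))
    (hQc : ∀ i j, ContDiffOn ℝ 1 (fun t => Q t i j) (Icc 0 T))
    (hRc : ∀ i j, ContDiffOn ℝ 1 (fun t => R t i j) (Icc 0 T))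
    (hPs : ∀ t ∈ Icc (0:ℝ) T, (P t).IsSymm)
    (hRs : ∀ t ∈ Icc (0:ℝ) T, (R t).IsSymm)
    (hRinv : ∀ t ∈ Icc (0:ℝ) T, IsUnit (R t).det)
    (A B C : ℝ → Matrix (Fin n) (Fin n) ℝ)
    (hA : ∀ t, A t = -(R t)⁻¹ * Q t)
    (hB : ∀ t, B t = (R t)⁻¹)
    (hC : ∀ t, C t = P t - (Q t)ᵀ * (R t)⁻¹ * Q t)
    (W : ℝ → Matrix (Fin n) (Fin n) ℝ)
    (hWc : ∀ i j, ContDiffOn ℝ 1 (fun t => W t i j) (Icc 0 T))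
    (hWs : ∀ t ∈ Icc (0:ℝ) T, (W t).IsSymm)
    (hW : ∀ t ∈ Icc (0:ℝ) T, ∀ i j,
      HasDerivAt (fun s => W s i j)
        ((C t - W t * A t - (A t)ᵀ * W t - W t * B t * W t) i j) t) :
    ∀ v : ℝ → Fin n → ℝ, ContDiff ℝ 1 v → v 0 = v T →
      (∫ t in (0:ℝ)..T,
        (v t ⬝ᵥ (P t).mulVec (v t) + 2 * (deriv v t ⬝ᵥ (Q t).mulVec (v t))
          + deriv v t ⬝ᵥ (R t).mulVec (deriv v t)))
      = v 0 ⬝ᵥ (W T - W 0).mulVec (v 0)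
        + ∫ t in (0:ℝ)..T,
            (((R t).mulVec (deriv v t) + (Q t).mulVec (v t) - (W t).mulVec (v t)) ⬝ᵥ
              ((R t)⁻¹).mulVec
                ((R t).mulVec (deriv v t) + (Q t).mulVec (v t) - (W t).mulVec (v t))) := by
  intro v hv hper
  have huIcc : uIcc (0:ℝ) T = Icc 0 T := uIcc_of_le hT.le
  -- continuity data
  have hvc : Continuous v := hv.continuous
  have hyc : Continuous (deriv v) := hv.continuous_deriv le_rfl
  have hPm : ContinuousOn P (Icc 0 T) :=
    continuousOn_pi.2 fun i => continuousOn_pi.2 fun j => (hPc i j).continuousOn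
  have hQm : ContinuousOn Q (Icc 0 T) :=
    continuousOn_pi.2 fun i => continuousOn_pi.2 fun j => (hQc i j).continuousOn
  have hRm : ContinuousOn R (Icc 0 T) :=
    continuousOn_pi.2 fun i => continuousOn_pi.2 fun j => (hRc i j).continuousOn
  have hWm : ContinuousOn W (Icc 0 T) :=
    continuousOn_pi.2 fun i => continuousOn_pi.2 fun j => (hWc i j).continuousOn
  have hRim : ContinuousOn (fun t => (R t)⁻¹) (Icc 0 T) := contOn_inv hRm hRinv
  set orig : ℝ → ℝ := fun t =>
    v t ⬝ᵥ (P t).mulVec (v t) + 2 * (deriv v t ⬝ᵥ (Q t).mulVec (v t))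
      + deriv v t ⬝ᵥ (R t).mulVec (deriv v t) with horig
  set sq : ℝ → ℝ := fun t =>
    ((R t).mulVec (deriv v t) + (Q t).mulVec (v t) - (W t).mulVec (v t)) ⬝ᵥ
      ((R t)⁻¹).mulVec
        ((R t).mulVec (deriv v t) + (Q t).mulVec (v t) - (W t).mulVec (v t)) with hsq
  have horigc : ContinuousOn orig (Icc 0 T) := by
    exact ((contOn_dp hvc.continuousOn hPm hvc.continuousOn).add
      (continuousOn_const.mul (contOn_dp hyc.continuousOn hQm hvc.continuousOn))).add
      (contOn_dp hyc.continuousOn hRm hyc.continuousOn)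
  have hvecc : ContinuousOn
      (fun t => (R t).mulVec (deriv v t) + (Q t).mulVec (v t) - (W t).mulVec (v t))
      (Icc 0 T) :=
    ((contOn_mv hRm hyc.continuousOn).add (contOn_mv hQm hvc.continuousOn)).sub
      (contOn_mv hWm hvc.continuousOn)
  have hsqc : ContinuousOn sq (Icc 0 T) := contOn_dp hvecc hRim hvecc
  have hiorig : IntervalIntegrable orig MeasureTheory.volume 0 T :=
    (horigc.mono (by rw [huIcc])).intervalIntegrable
  have hisq : IntervalIntegrable sq MeasureTheory.volume 0 T :=
    (hsqc.mono (by rw [huIcc])).intervalIntegrable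
  -- the derivative of the quadratic form
  set g : ℝ → ℝ := fun t => v t ⬝ᵥ W t *ᵥ v t with hg
  have hderiv : ∀ t ∈ uIcc (0:ℝ) T, HasDerivAt g (orig t - sq t) t := by
    intro t ht
    rw [huIcc] at ht
    have hD := quad_deriv v W (C t - W t * A t - (A t)ᵀ * W t - W t * B t * W t)
      (deriv v t) t (hv.differentiable one_ne_zero t).hasDerivAt
      (hW t ht)
    rw [hA t, hB t, hC t] at hD
    have hkey := key_identity (P t) (Q t) (R t) (W t) (hRinv t ht) (hRs t ht) (hWs t ht)
      (v t) (deriv v t)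
    have heq : deriv v t ⬝ᵥ W t *ᵥ v t
        + v t ⬝ᵥ ((P t - (Q t)ᵀ * (R t)⁻¹ * Q t) - W t * (-(R t)⁻¹ * Q t)
            - (-(R t)⁻¹ * Q t)ᵀ * W t - W t * (R t)⁻¹ * W t) *ᵥ v t
        + v t ⬝ᵥ W t *ᵥ deriv v t
        = orig t - sq t := by
      simp only [horig, hsq]
      linarith [hkey]
    rw [heq] at hD
    exact hD
  have hftc : ∫ t in (0:ℝ)..T, (orig t - sq t) = g T - g 0 :=
    intervalIntegral.integral_eq_sub_of_hasDerivAt hderiv (hiorig.sub hisq)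
  rw [intervalIntegral.integral_sub hiorig hisq] at hftc
  have hgT : g T - g 0 = v 0 ⬝ᵥ (W T - W 0).mulVec (v 0) := by
    simp only [hg, ← hper, sub_mulVec, dotProduct_sub]
  linarith [hftc, hgT.symm]
end

section
/- Let S ∈ O(n) be an orthogonal matrix and τ > 0. Let P, Q, R : [0,τ] → ℝ^{n×n} be C¹ matrix functions with P(t), R(t) symmetric and R(t) positive definite for all t ∈ [0,τ]; set A = −R⁻¹Q, B = R⁻¹, C = P − QᵀR⁻¹Q. Suppose there exists a C¹ symmetric solution W : [0,τ] → ℝ^{n×n} of the Riccati differential equation Ẇ − C + WA + AᵀW + WBW = 0 on [0,τ] such that Sᵀ W(τ) S − W(0) is positive definite (condition (SR*)). Then the quadratic functional Q(v) = ∫₀^τ ( v·Pv + 2 v̇·Qv + v̇·Rv̇ ) dt is strictly positive for every nonzero C¹ curve v : [0,τ] → ℝⁿ satisfying the symmetric boundary condition v(τ) = S v(0). -/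
open Matrix Set intervalIntegral

lemma aux_mv_dot {n : ℕ} (N : Matrix (Fin n) (Fin n) ℝ) (x w : Fin n → ℝ) :
    N.mulVec x ⬝ᵥ w = x ⬝ᵥ Nᵀ.mulVec w := by
  rw [Matrix.dotProduct_mulVec, Matrix.vecMul_transpose]

lemma aux_identity {n : ℕ} (Rm Qm Wm Pm Wd : Matrix (Fin n) (Fin n) ℝ)
    (hW : Wmᵀ = Wm) (hRi : Rm * Rm⁻¹ = 1) (hRi' : Rm⁻¹ * Rm = 1)
    (hRit : (Rm⁻¹)ᵀ = Rm⁻¹)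
    (hWd : Wd = Pm - Qmᵀ * Rm⁻¹ * Qm + Wm * Rm⁻¹ * Qm + Qmᵀ * Rm⁻¹ * Wm - Wm * Rm⁻¹ * Wm)
    (x y : Fin n → ℝ) :
    x ⬝ᵥ Pm.mulVec x + 2 * (y ⬝ᵥ Qm.mulVec x) + y ⬝ᵥ Rm.mulVec y
      = (y ⬝ᵥ Wm.mulVec x + x ⬝ᵥ Wd.mulVec x + x ⬝ᵥ Wm.mulVec y)
        + (y + (Rm⁻¹ * (Qm - Wm)).mulVec x) ⬝ᵥ
            Rm.mulVec (y + (Rm⁻¹ * (Qm - Wm)).mulVec x) := by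
  set m : Fin n → ℝ := (Rm⁻¹ * (Qm - Wm)).mulVec x with hm
  have h1 : Rm.mulVec (y + m) = Rm.mulVec y + (Qm - Wm).mulVec x := by
    rw [Matrix.mulVec_add, hm, Matrix.mulVec_mulVec, ← Matrix.mul_assoc, hRi, Matrix.one_mul]
  have h2 : m ⬝ᵥ Rm.mulVec y = y ⬝ᵥ (Qm - Wm).mulVec x := by
    rw [hm, aux_mv_dot, Matrix.mulVec_mulVec, Matrix.transpose_mul, hRit,
      Matrix.mul_assoc, hRi', Matrix.mul_one, ← aux_mv_dot, dotProduct_comm]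
  have h3 : m ⬝ᵥ (Qm - Wm).mulVec x
      = x ⬝ᵥ ((Qm - Wm)ᵀ * Rm⁻¹ * (Qm - Wm)).mulVec x := by
    rw [hm, aux_mv_dot, Matrix.mulVec_mulVec, Matrix.transpose_mul, hRit, Matrix.mul_assoc]
  have h4 : x ⬝ᵥ Wm.mulVec y = y ⬝ᵥ Wm.mulVec x := by
    rw [dotProduct_comm, aux_mv_dot, hW]
  have h5 : Wd + (Qm - Wm)ᵀ * Rm⁻¹ * (Qm - Wm) = Pm := by
    rw [hWd, Matrix.transpose_sub, hW]
    noncomm_ring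
  have h6 : x ⬝ᵥ Wd.mulVec x + x ⬝ᵥ ((Qm - Wm)ᵀ * Rm⁻¹ * (Qm - Wm)).mulVec x
      = x ⬝ᵥ Pm.mulVec x := by
    rw [← dotProduct_add, ← Matrix.add_mulVec, h5]
  have h7 : y ⬝ᵥ (Qm - Wm).mulVec x = y ⬝ᵥ Qm.mulVec x - y ⬝ᵥ Wm.mulVec x := by
    rw [Matrix.sub_mulVec, dotProduct_sub]
  rw [h1, add_dotProduct, dotProduct_add, dotProduct_add, h2, h3, h4]
  linarith [h6, h7]

lemma aux_int_pos {g : ℝ → ℝ} {τ : ℝ} (hτ : 0 < τ)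
    (hg : ContinuousOn g (Icc 0 τ)) (hnn : ∀ t ∈ Icc (0:ℝ) τ, 0 ≤ g t)
    {t0 : ℝ} (ht0 : t0 ∈ Icc (0:ℝ) τ) (hpos : 0 < g t0) :
    0 < ∫ t in (0:ℝ)..τ, g t := by
  have hev : ∀ᶠ s in nhdsWithin t0 (Icc 0 τ), g t0 / 2 < g s :=
    (hg t0 ht0).eventually (eventually_gt_nhds (by linarith))
  rw [eventually_nhdsWithin_iff, Metric.eventually_nhds_iff] at hev
  obtain ⟨δ, hδ, hball⟩ := hev
  set δ' : ℝ := min (δ / 2) (τ / 2) with hδ'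
  have hδ'pos : 0 < δ' := lt_min (by linarith) (by linarith)
  set a : ℝ := max 0 (t0 - δ') with ha
  set b : ℝ := min τ (t0 + δ') with hb
  have hab : a < b := by
    rcases lt_or_eq_of_le ht0.2 with h | h
    · have : t0 < b := lt_min h (by linarith)
      exact lt_of_le_of_lt (max_le ht0.1 (by linarith)) this
    · have ha' : a < τ := max_lt hτ (by rw [h]; linarith)
      have hb' : b = τ := by rw [hb, h]; exact min_eq_left (by linarith)
      rw [hb']; exact ha'
  have hsub : Icc a b ⊆ Icc 0 τ := Icc_subset_Icc (le_max_left _ _) (min_le_left _ _)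
  have hlow : ∀ s ∈ Icc a b, g t0 / 2 ≤ g s := by
    intro s hs
    have hd : dist s t0 < δ := by
      rw [Real.dist_eq, abs_lt]
      constructor
      · have : t0 - δ' ≤ a := le_max_right _ _
        have h2 : δ' < δ := lt_of_le_of_lt (min_le_left _ _) (by linarith)
        nlinarith [hs.1]
      · have : b ≤ t0 + δ' := min_le_right _ _
        have h2 : δ' < δ := lt_of_le_of_lt (min_le_left _ _) (by linarith)
        nlinarith [hs.2]
    exact (hball hd (hsub hs)).le
  have hint : IntervalIntegrable g MeasureTheory.volume 0 τ :=
    (hg.mono (by rw [uIcc_of_le hτ.le])).intervalIntegrable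
  have hint1 : IntervalIntegrable g MeasureTheory.volume 0 a :=
    hint.mono_set (by rw [uIcc_of_le hτ.le, uIcc_of_le (le_max_left 0 (t0 - δ'))]
                      exact Icc_subset_Icc le_rfl ((hsub ⟨le_rfl, hab.le⟩).2))
  have hint2 : IntervalIntegrable g MeasureTheory.volume a b :=
    hint.mono_set (by rw [uIcc_of_le hτ.le, uIcc_of_le hab.le]; exact hsub)
  have hint3 : IntervalIntegrable g MeasureTheory.volume b τ :=
    hint.mono_set (by rw [uIcc_of_le hτ.le, uIcc_of_le (hsub ⟨hab.le, le_rfl⟩).2]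
                      exact Icc_subset_Icc (hsub ⟨hab.le, le_rfl⟩).1 le_rfl)
  have hsplit : ∫ t in (0:ℝ)..τ, g t
      = (∫ t in (0:ℝ)..a, g t) + ((∫ t in a..b, g t) + ∫ t in b..τ, g t) := by
    rw [integral_add_adjacent_intervals hint2 hint3,
      integral_add_adjacent_intervals hint1 (hint2.trans hint3)]
  have h1 : 0 ≤ ∫ t in (0:ℝ)..a, g t :=
    integral_nonneg (le_max_left _ _)
      (fun u hu => hnn u ⟨hu.1, hu.2.trans (hsub ⟨le_rfl, hab.le⟩).2⟩)
  have h3 : 0 ≤ ∫ t in b..τ, g t :=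
    integral_nonneg (hsub ⟨hab.le, le_rfl⟩).2
      (fun u hu => hnn u ⟨(hsub ⟨hab.le, le_rfl⟩).1.trans hu.1, hu.2⟩)
  have h2 : g t0 / 2 * (b - a) ≤ ∫ t in a..b, g t := by
    have := intervalIntegral.integral_mono_on hab.le (intervalIntegrable_const) hint2 hlow
    rw [intervalIntegral.integral_const, smul_eq_mul] at this
    linarith
  have hba : 0 < g t0 / 2 * (b - a) := by nlinarith
  rw [hsplit]
  linarith

lemma aux_contOn_form {n : ℕ} {s : Set ℝ} {M : ℝ → Matrix (Fin n) (Fin n) ℝ}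
    {u w : ℝ → Fin n → ℝ}
    (hM : ∀ i j, ContinuousOn (fun t => M t i j) s)
    (hu : ∀ i, ContinuousOn (fun t => u t i) s)
    (hw : ∀ i, ContinuousOn (fun t => w t i) s) :
    ContinuousOn (fun t => u t ⬝ᵥ (M t).mulVec (w t)) s := by
  simp only [dotProduct, Matrix.mulVec]
  exact continuousOn_finset_sum _ fun i _ =>
    (hu i).mul (continuousOn_finset_sum _ fun j _ => (hM i j).mul (hw j))

lemma aux_mulOn {n : ℕ} {s : Set ℝ} {f g : ℝ → Matrix (Fin n) (Fin n) ℝ}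
    (hf : ContinuousOn f s) (hg : ContinuousOn g s) :
    ContinuousOn (fun t => f t * g t) s :=
  hf.mul hg

lemma aux_entry {n : ℕ} {s : Set ℝ} {f : ℝ → Matrix (Fin n) (Fin n) ℝ}
    (hf : ContinuousOn f s) (i j : Fin n) : ContinuousOn (fun t => f t i j) s :=
  (continuous_apply j).comp_continuousOn ((continuous_apply i).comp_continuousOn hf)

/-- Let `S ∈ O(n)` and `τ > 0`. Under the strengthened Legendre
condition (`R(t) > 0` on `[0,τ]`), with `A = −R⁻¹Q`, `B = R⁻¹`, `C = P − QᵀR⁻¹Q`, if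
condition (SR*) holds — there is a `C¹` symmetric solution `W` of the Riccati equation on
`[0,τ]` with `SᵀW(τ)S − W(0)` positive definite — then the quadratic functional
`Q(v) = ∫₀^τ (v·Pv + 2 v̇·Qv + v̇·Rv̇) dt` is strictly positive on every nonzero `C¹`
curve satisfying the symmetric boundary condition `v(τ) = S v(0)`. -/
theorem stmt_14 (n : ℕ) (hn : 0 < n) (τ : ℝ) (hτ : 0 < τ)
    (S : Matrix (Fin n) (Fin n) ℝ) (hS : Sᵀ * S = 1)
    (P Q R : ℝ → Matrix (Fin n) (Fin n) ℝ)
    (hPc : ∀ i j, ContDiffOn ℝ 1 (fun t => P t i j) (Icc 0 τ))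
    (hQc : ∀ i j, ContDiffOn ℝ 1 (fun t => Q t i j) (Icc 0 τ))
    (hRc : ∀ i j, ContDiffOn ℝ 1 (fun t => R t i j) (Icc 0 τ))
    (hPs : ∀ t ∈ Icc (0:ℝ) τ, (P t).IsSymm)
    (hRs : ∀ t ∈ Icc (0:ℝ) τ, (R t).IsSymm)
    (hL' : ∀ t ∈ Icc (0:ℝ) τ, (R t).PosDef)
    (A B C : ℝ → Matrix (Fin n) (Fin n) ℝ)
    (hA : ∀ t, A t = -(R t)⁻¹ * Q t)
    (hB : ∀ t, B t = (R t)⁻¹)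
    (hC : ∀ t, C t = P t - (Q t)ᵀ * (R t)⁻¹ * Q t)
    -- (SR*) condition
    (W : ℝ → Matrix (Fin n) (Fin n) ℝ)
    (hWc : ∀ i j, ContDiffOn ℝ 1 (fun t => W t i j) (Icc 0 τ))
    (hWs : ∀ t ∈ Icc (0:ℝ) τ, (W t).IsSymm)
    (hW : ∀ t ∈ Icc (0:ℝ) τ, ∀ i j,
      HasDerivAt (fun s => W s i j)
        ((C t - W t * A t - (A t)ᵀ * W t - W t * B t * W t) i j) t)
    (hWbc : (Sᵀ * W τ * S - W 0).PosDef) :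
    ∀ v : ℝ → Fin n → ℝ, ContDiff ℝ 1 v → v τ = S.mulVec (v 0) →
      (∃ t ∈ Icc (0:ℝ) τ, v t ≠ 0) →
      0 < ∫ t in (0:ℝ)..τ,
        (v t ⬝ᵥ (P t).mulVec (v t) + 2 * (deriv v t ⬝ᵥ (Q t).mulVec (v t))
          + deriv v t ⬝ᵥ (R t).mulVec (deriv v t)) := by
  intro v hv hvbc hvne
  have hIcc : uIcc (0:ℝ) τ = Icc 0 τ := uIcc_of_le hτ.le
  -- basic facts on R
  have hdet : ∀ t ∈ Icc (0:ℝ) τ, IsUnit (R t).det :=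
    fun t ht => ((hL' t ht).det_pos).ne'.isUnit
  have hRin : ∀ t ∈ Icc (0:ℝ) τ, R t * (R t)⁻¹ = 1 :=
    fun t ht => Matrix.mul_nonsing_inv _ (hdet t ht)
  have hRin' : ∀ t ∈ Icc (0:ℝ) τ, (R t)⁻¹ * R t = 1 :=
    fun t ht => Matrix.nonsing_inv_mul _ (hdet t ht)
  have hRit : ∀ t ∈ Icc (0:ℝ) τ, ((R t)⁻¹)ᵀ = (R t)⁻¹ := by
    intro t ht
    rw [Matrix.transpose_nonsing_inv, (hRs t ht).eq]
  -- the derivative matrix of W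
  set Wd : ℝ → Matrix (Fin n) (Fin n) ℝ :=
    fun t => C t - W t * A t - (A t)ᵀ * W t - W t * B t * W t with hWddef
  have hWdeq : ∀ t ∈ Icc (0:ℝ) τ, Wd t
      = P t - (Q t)ᵀ * (R t)⁻¹ * Q t + W t * (R t)⁻¹ * Q t
        + (Q t)ᵀ * (R t)⁻¹ * W t - W t * (R t)⁻¹ * W t := by
    intro t ht
    rw [hWddef]
    simp only [hA, hB, hC, Matrix.transpose_neg, Matrix.transpose_mul, hRit t ht]
    noncomm_ring
  -- the vector z and scalar functions
  set z : ℝ → Fin n → ℝ :=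
    fun t => deriv v t + ((R t)⁻¹ * (Q t - W t)).mulVec (v t) with hzdef
  set zRz : ℝ → ℝ := fun t => z t ⬝ᵥ (R t).mulVec (z t) with hzRzdef
  set G : ℝ → ℝ := fun t => v t ⬝ᵥ (W t).mulVec (v t) with hGdef
  set Gd : ℝ → ℝ := fun t => deriv v t ⬝ᵥ (W t).mulVec (v t)
    + v t ⬝ᵥ (Wd t).mulVec (v t) + v t ⬝ᵥ (W t).mulVec (deriv v t) with hGddef
  set F : ℝ → ℝ := fun t => v t ⬝ᵥ (P t).mulVec (v t)
    + 2 * (deriv v t ⬝ᵥ (Q t).mulVec (v t))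
    + deriv v t ⬝ᵥ (R t).mulVec (deriv v t) with hFdef
  -- key pointwise identity
  have hkey : ∀ t ∈ Icc (0:ℝ) τ, F t = Gd t + zRz t := by
    intro t ht
    exact aux_identity (R t) (Q t) (W t) (P t) (Wd t) (hWs t ht).eq (hRin t ht)
      (hRin' t ht) (hRit t ht) (hWdeq t ht) (v t) (deriv v t)
  -- derivatives of components of v
  have hvdiff : Differentiable ℝ v := hv.differentiable one_ne_zero
  have hvd : ∀ t (i : Fin n), HasDerivAt (fun s => v s i) (deriv v t i) t :=
    fun t i => hasDerivAt_pi.1 (hvdiff t).hasDerivAt i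
  -- derivative of G
  have hGd : ∀ t ∈ Icc (0:ℝ) τ, HasDerivAt G (Gd t) t := by
    intro t ht
    have hsum : HasDerivAt (fun s => ∑ i, v s i * ∑ j, W s i j * v s j)
        (∑ i, (deriv v t i * ∑ j, W t i j * v t j
          + v t i * ∑ j, (Wd t i j * v t j + W t i j * deriv v t j))) t := by
      apply HasDerivAt.fun_sum
      intro i _
      exact (hvd t i).mul (HasDerivAt.fun_sum fun j _ => (hW t ht i j).mul (hvd t j))
    have hfun : G = fun s => ∑ i, v s i * ∑ j, W s i j * v s j := by
      funext s
      simp [hGdef, dotProduct, Matrix.mulVec]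
    have hval : Gd t = ∑ i, (deriv v t i * ∑ j, W t i j * v t j
        + v t i * ∑ j, (Wd t i j * v t j + W t i j * deriv v t j)) := by
      simp [hGddef, dotProduct, Matrix.mulVec, Finset.sum_add_distrib, mul_add,
        Finset.mul_sum]
      try ring_nf
      try rw [Finset.sum_add_distrib]
    rw [hfun, hval]
    exact hsum
  -- continuity facts
  have hvC : ∀ i, ContinuousOn (fun t => v t i) (Icc 0 τ) :=
    fun i => ((continuous_apply i).comp hv.continuous).continuousOn
  have hyC : ∀ i, ContinuousOn (fun t => deriv v t i) (Icc 0 τ) :=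
    fun i => ((continuous_apply i).comp (hv.continuous_deriv le_rfl)).continuousOn
  have hRC : ContinuousOn R (Icc 0 τ) :=
    continuousOn_pi.2 fun i => continuousOn_pi.2 fun j => (hRc i j).continuousOn
  have hQC : ContinuousOn Q (Icc 0 τ) :=
    continuousOn_pi.2 fun i => continuousOn_pi.2 fun j => (hQc i j).continuousOn
  have hPC : ContinuousOn P (Icc 0 τ) :=
    continuousOn_pi.2 fun i => continuousOn_pi.2 fun j => (hPc i j).continuousOn
  have hWC : ContinuousOn W (Icc 0 τ) :=
    continuousOn_pi.2 fun i => continuousOn_pi.2 fun j => (hWc i j).continuousOn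
  have hRiC : ContinuousOn (fun t => (R t)⁻¹) (Icc 0 τ) := by
    have : ∀ t, (R t)⁻¹ = ((R t).det)⁻¹ • (R t).adjugate := by
      intro t
      rw [Matrix.inv_def, Ring.inverse_eq_inv']
    simp only [this]
    exact ((continuous_id.matrix_det.comp_continuousOn hRC).inv₀
        (fun t ht => ((hL' t ht).det_pos).ne')).smul
      (continuous_id.matrix_adjugate.comp_continuousOn hRC)
  have hMC : ContinuousOn (fun t => (R t)⁻¹ * (Q t - W t)) (Icc 0 τ) :=
    aux_mulOn hRiC (hQC.sub hWC)
  have hzC : ∀ i, ContinuousOn (fun t => z t i) (Icc 0 τ) := by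
    intro i
    simp only [hzdef, Pi.add_apply, Matrix.mulVec, dotProduct]
    exact (hyC i).add (continuousOn_finset_sum _ fun j _ =>
      (aux_entry hMC i j).mul (hvC j))
  have hzRzC : ContinuousOn zRz (Icc 0 τ) :=
    aux_contOn_form (fun i j => aux_entry hRC i j) hzC hzC
  have hWdC : ContinuousOn Wd (Icc 0 τ) := by
    have hcont : ContinuousOn (fun t => P t - (Q t)ᵀ * (R t)⁻¹ * Q t + W t * (R t)⁻¹ * Q t
        + (Q t)ᵀ * (R t)⁻¹ * W t - W t * (R t)⁻¹ * W t) (Icc 0 τ) :=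
      ((((hPC.sub (aux_mulOn (aux_mulOn (continuous_id.matrix_transpose.comp_continuousOn hQC) hRiC) hQC)).add
        (aux_mulOn (aux_mulOn hWC hRiC) hQC)).add
        (aux_mulOn (aux_mulOn (continuous_id.matrix_transpose.comp_continuousOn hQC) hRiC) hWC)).sub
        (aux_mulOn (aux_mulOn hWC hRiC) hWC))
    exact hcont.congr (fun t ht => hWdeq t ht)
  have hGdC : ContinuousOn Gd (Icc 0 τ) := by
    apply ContinuousOn.add
    apply ContinuousOn.add
    · exact aux_contOn_form (fun i j => aux_entry hWC i j) hyC hvC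
    · exact aux_contOn_form (fun i j => aux_entry hWdC i j) hvC hvC
    · exact aux_contOn_form (fun i j => aux_entry hWC i j) hvC hyC
  have hFC : ContinuousOn F (Icc 0 τ) := by
    apply ContinuousOn.add
    apply ContinuousOn.add
    · exact aux_contOn_form (fun i j => aux_entry hPC i j) hvC hvC
    · exact (continuousOn_const.mul
        (aux_contOn_form (fun i j => aux_entry hQC i j) hyC hvC))
    · exact aux_contOn_form (fun i j => aux_entry hRC i j) hyC hyC
  -- integrability
  have hGdInt : IntervalIntegrable Gd MeasureTheory.volume 0 τ :=
    (hGdC.mono (by rw [hIcc])).intervalIntegrable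
  have hzRzInt : IntervalIntegrable zRz MeasureTheory.volume 0 τ :=
    (hzRzC.mono (by rw [hIcc])).intervalIntegrable
  -- FTC
  have hFTC : ∫ t in (0:ℝ)..τ, Gd t = G τ - G 0 :=
    integral_eq_sub_of_hasDerivAt (fun t ht => hGd t (hIcc ▸ ht)) hGdInt
  -- rewrite the integral
  have hsplit : ∫ t in (0:ℝ)..τ, F t
      = (G τ - G 0) + ∫ t in (0:ℝ)..τ, zRz t := by
    rw [intervalIntegral.integral_congr (g := fun t => Gd t + zRz t)
      (fun t ht => hkey t (hIcc ▸ ht)),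
      intervalIntegral.integral_add hGdInt hzRzInt, hFTC]
  -- boundary term
  have hbound : G τ - G 0 = v 0 ⬝ᵥ (Sᵀ * W τ * S - W 0).mulVec (v 0) := by
    rw [Matrix.sub_mulVec, dotProduct_sub, hGdef]
    simp only [hvbc]
    congr 1
    rw [Matrix.mulVec_mulVec, aux_mv_dot S, Matrix.mulVec_mulVec, ← Matrix.mul_assoc]
  -- nonnegativity of zRz
  have hzRznn : ∀ t ∈ Icc (0:ℝ) τ, 0 ≤ zRz t := by
    intro t ht
    exact (by simpa using (hL' t ht).posSemidef.dotProduct_mulVec_nonneg (z t) : 0 ≤ z t ⬝ᵥ (R t).mulVec (z t))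
  have hzRzint_nn : 0 ≤ ∫ t in (0:ℝ)..τ, zRz t :=
    integral_nonneg hτ.le hzRznn
  -- main case split
  show 0 < ∫ t in (0:ℝ)..τ, F t
  rw [hsplit, hbound]
  by_cases hv0 : v 0 = 0
  · -- boundary term vanishes; show the z-integral is positive
    have hbz : v 0 ⬝ᵥ (Sᵀ * W τ * S - W 0).mulVec (v 0) = 0 := by
      simp [hv0]
    rw [hbz, zero_add]
    -- find a point where z ≠ 0
    have hzne : ∃ t1 ∈ Icc (0:ℝ) τ, z t1 ≠ 0 := by
      by_contra hcon
      push_neg at hcon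
      -- then v solves a linear ODE with v 0 = 0, so v ≡ 0 by Gronwall
      obtain ⟨t', ht', hvt'⟩ := hvne
      -- bound on the matrix entries
      obtain ⟨K0, hK0⟩ : ∃ K0, ∀ t ∈ Icc (0:ℝ) τ,
          (∑ i, ∑ j, |((R t)⁻¹ * (Q t - W t)) i j|) ≤ K0 := by
        have hc : ContinuousOn (fun t => ∑ i, ∑ j, |((R t)⁻¹ * (Q t - W t)) i j|)
            (Icc 0 τ) :=
          continuousOn_finset_sum _ fun i _ => continuousOn_finset_sum _ fun j _ =>
            (aux_entry hMC i j).abs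
        obtain ⟨K0, hK0⟩ := (isCompact_Icc.exists_bound_of_continuousOn hc)
        exact ⟨K0, fun t ht => (le_abs_self _).trans (by simpa using hK0 t ht)⟩
      set K : ℝ := max K0 0 with hK
      have hbdd : ∀ t ∈ Ico (0:ℝ) τ, ‖deriv v t‖ ≤ K * ‖v t‖ + 0 := by
        intro t ht
        have htI : t ∈ Icc (0:ℝ) τ := Ico_subset_Icc_self ht
        have hz0 : z t = 0 := hcon t htI
        have hder : deriv v t = -(((R t)⁻¹ * (Q t - W t)).mulVec (v t)) := by
          have := hz0
          rw [hzdef] at this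
          simp only at this
          have := congrArg (fun u => u - ((R t)⁻¹ * (Q t - W t)).mulVec (v t)) this
          simpa [add_sub_cancel_right] using this
        rw [hder, add_zero, norm_neg]
        have hKnn : 0 ≤ K * ‖v t‖ := mul_nonneg (le_max_right K0 0) (norm_nonneg _)
        rw [pi_norm_le_iff_of_nonneg hKnn]
        intro i
        have h1 : |(((R t)⁻¹ * (Q t - W t)).mulVec (v t)) i|
            ≤ ∑ j, |((R t)⁻¹ * (Q t - W t)) i j| * ‖v t‖ := by
          simp only [Matrix.mulVec, dotProduct]
          refine (Finset.abs_sum_le_sum_abs _ _).trans ?_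
          apply Finset.sum_le_sum
          intro j _
          rw [abs_mul]
          exact mul_le_mul_of_nonneg_left (norm_le_pi_norm (v t) j) (abs_nonneg _)
        rw [Real.norm_eq_abs]
        refine h1.trans ?_
        rw [← Finset.sum_mul]
        apply mul_le_mul_of_nonneg_right _ (norm_nonneg _)
        calc ∑ j, |((R t)⁻¹ * (Q t - W t)) i j|
            ≤ ∑ i, ∑ j, |((R t)⁻¹ * (Q t - W t)) i j| :=
              Finset.single_le_sum (f := fun i => ∑ j, |((R t)⁻¹ * (Q t - W t)) i j|)
                (fun i _ => Finset.sum_nonneg fun j _ => abs_nonneg _) (Finset.mem_univ i)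
          _ ≤ K0 := hK0 t htI
          _ ≤ K := le_max_left _ _
      have hgron := norm_le_gronwallBound_of_norm_deriv_right_le
        (f := v) (f' := deriv v) (δ := 0) (K := K) (ε := 0) (a := 0) (b := τ)
        hv.continuous.continuousOn
        (fun s _ => (hvdiff s).hasDerivAt.hasDerivWithinAt)
        (by simp [hv0]) hbdd
      have := hgron t' ht'
      rw [gronwallBound_ε0_δ0] at this
      exact hvt' (norm_le_zero_iff.1 this)
    obtain ⟨t1, ht1, hz1⟩ := hzne
    exact aux_int_pos hτ hzRzC hzRznn ht1 (by simpa using (hL' t1 ht1).dotProduct_mulVec_pos hz1 : 0 < z t1 ⬝ᵥ (R t1).mulVec (z t1))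
  · -- boundary term is positive
    have hb : 0 < v 0 ⬝ᵥ (Sᵀ * W τ * S - W 0).mulVec (v 0) := by simpa using hWbc.dotProduct_mulVec_pos hv0
    linarith
end
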